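/- Let ι be a finite nonempty index set, c : ι → ℝ with c(i) > 0 for all i, d : ι → ℝ, e > 0, K₁ > 0, and K₂ ∈ ℝ. Consider minimizing ∑_i β(i) + Δ over all (β, Δ) with β(i) ≥ 0 for all i, Δ ≥ 0, ∑_i c(i)β(i) = K₁, and ∑_i d(i)β(i) + e·Δ = K₂. Suppose (β*, Δ*) is an optimal solution with Δ* > 0, and suppose the minimum of (e − d(i))/c(i) over i ∈ ι is attained at a unique index i*. Then β*(j) = 0 for every j ≠ i*, β*(i*) = K₁/c(i*), and the optimal value equals K₂/e + (K₁/e)·(e − d(i*))/c(i*). -/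

import Mathlib

/-- structure of the stage subproblem.  Minimize `∑ i, β i + Δ`
subject to `β ≥ 0`, `Δ ≥ 0`, `∑ i, c i * β i = K₁`, `∑ i, d i * β i + e * Δ = K₂`,
with `c i > 0`, `e > 0`, `K₁ > 0`.  If `(β*, Δ*)` is optimal with `Δ* > 0` and the
minimum of `(e - d i) / c i` is attained at the unique index `i*`, then `β*` is
supported on `i*` with `β* i* = K₁ / c i*`, and the optimal value equals
`K₂ / e + (K₁ / e) * (e - d i*) / c i*`. -/
theorem stage_subproblem_single_transmitter (ι : Type*) [Fintype ι] [Nonempty ι]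
    (c d : ι → ℝ) (hc : ∀ i, 0 < c i)
    (e K₁ K₂ : ℝ) (he : 0 < e) (hK₁ : 0 < K₁)
    (βstar : ι → ℝ) (Δstar : ℝ)
    (hβ : ∀ i, 0 ≤ βstar i) (hΔ : 0 ≤ Δstar)
    (hc1 : ∑ i, c i * βstar i = K₁)
    (hc2 : ∑ i, d i * βstar i + e * Δstar = K₂)
    (hopt : ∀ (β : ι → ℝ) (Δ : ℝ), (∀ i, 0 ≤ β i) → 0 ≤ Δ →
      ∑ i, c i * β i = K₁ → ∑ i, d i * β i + e * Δ = K₂ →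
      ∑ i, βstar i + Δstar ≤ ∑ i, β i + Δ)
    (hΔpos : 0 < Δstar)
    (istar : ι)
    (huniq : ∀ i, i ≠ istar → (e - d istar) / c istar < (e - d i) / c i) :
    (∀ j, j ≠ istar → βstar j = 0) ∧
    βstar istar = K₁ / c istar ∧
    ∑ i, βstar i + Δstar = K₂ / e + (K₁ / e) * ((e - d istar) / c istar) := by
  classical
  have hsupp : ∀ j, j ≠ istar → βstar j = 0 := by
    intro j hj
    by_contra hne
    have hbj : 0 < βstar j := lt_of_le_of_ne (hβ j) (Ne.symm hne)
    have hci := hc istar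
    have hcj := hc j
    set δ : ℝ := d istar * c j / c istar - d j with hδ
    have hmaxpos : (0:ℝ) < 1 + max δ 0 := by positivity
    set t : ℝ := min (βstar j) (e * Δstar / (1 + max δ 0)) with ht
    have htpos : 0 < t := lt_min hbj (by positivity)
    have htle : t ≤ βstar j := min_le_left _ _
    have hΔ' : 0 ≤ Δstar - t * δ / e := by
      rcases le_or_gt δ 0 with h | h
      · have h1 : t * δ ≤ 0 := mul_nonpos_of_nonneg_of_nonpos htpos.le h
        have : t * δ / e ≤ 0 := div_nonpos_of_nonpos_of_nonneg h1 he.le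
        linarith
      · have h1 : t ≤ e * Δstar / (1 + max δ 0) := min_le_right _ _
        have h2 : max δ 0 = δ := max_eq_left h.le
        rw [h2] at h1
        have h3 : t * (1 + δ) ≤ e * Δstar := by
          rw [← le_div_iff₀ (by linarith)]; exact h1
        have h4 : t * δ ≤ e * Δstar := by nlinarith
        have : t * δ / e ≤ Δstar := by
          rw [div_le_iff₀ he]; linarith [mul_comm Δstar e]
        linarith
    set β' : ι → ℝ := fun i => if i = j then βstar j - t
      else if i = istar then βstar istar + t * c j / c istar else βstar i with hβ'def
    have hkey : ∀ f : ι → ℝ, ∑ i, f i * β' i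
        = ∑ i, f i * βstar i + f istar * (t * c j / c istar) - f j * t := by
      intro f
      have hpt : ∀ i, f i * β' i = f i * βstar i
          + (if i = istar then f istar * (t * c j / c istar) else 0)
          - (if i = j then f j * t else 0) := by
        intro i
        by_cases h1 : i = j
        · subst h1
          simp only [hβ'def, if_pos rfl, if_neg hj, eq_self_iff_true, if_true]
          ring
        · by_cases h2 : i = istar
          · subst h2
            simp only [hβ'def, if_neg h1, if_pos rfl, eq_self_iff_true, if_true]
            ring
          · simp only [hβ'def, if_neg h1, if_neg h2]
            ring
      rw [Finset.sum_congr rfl (fun i _ => hpt i)]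
      rw [Finset.sum_sub_distrib, Finset.sum_add_distrib]
      rw [Finset.sum_ite_eq' Finset.univ istar, Finset.sum_ite_eq' Finset.univ j]
      simp
    have hsum1 : ∑ i, β' i = ∑ i, βstar i + t * c j / c istar - t := by
      have h := hkey (fun _ => 1)
      simpa using h
    have hc1' : ∑ i, c i * β' i = K₁ := by
      rw [hkey c, hc1]
      field_simp
      ring
    have hdsum : ∑ i, d i * β' i = ∑ i, d i * βstar i + t * δ := by
      rw [hkey d, hδ]
      field_simp
      ring
    have hβ'nonneg : ∀ i, 0 ≤ β' i := by
      intro i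
      simp only [hβ'def]
      split_ifs with h1 h2
      · linarith
      · have h3 : 0 ≤ t * c j / c istar := by positivity
        linarith [hβ istar]
      · exact hβ i
    have hc2' : ∑ i, d i * β' i + e * (Δstar - t * δ / e) = K₂ := by
      rw [hdsum]
      have he' : e * (Δstar - t * δ / e) = e * Δstar - t * δ := by
        field_simp
      rw [he']
      linarith
    have hle := hopt β' (Δstar - t * δ / e) hβ'nonneg hΔ' hc1' hc2'
    rw [hsum1] at hle
    have hlt := huniq j hj
    have keyeq : t * c j / c istar - t - t * δ / e
        = (t * c j / e) * ((e - d istar) / c istar - (e - d j) / c j) := by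
      rw [hδ]; field_simp; ring
    have hneg : (t * c j / e) * ((e - d istar) / c istar - (e - d j) / c j) < 0 :=
      mul_neg_of_pos_of_neg (by positivity) (by linarith)
    linarith
  have hci := hc istar
  have hsum_c : c istar * βstar istar = K₁ := by
    rw [← hc1]
    exact (Finset.sum_eq_single (f := fun i => c i * βstar i) istar
      (fun b _ hb => by show c b * βstar b = 0; rw [hsupp b hb, mul_zero])
      (fun h => absurd (Finset.mem_univ istar) h)).symm
  have hβi : βstar istar = K₁ / c istar := by
    rw [eq_div_iff hci.ne']
    linear_combination hsum_c
  have hsumβ : ∑ i, βstar i = βstar istar :=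
    Finset.sum_eq_single istar (fun b _ hb => hsupp b hb)
      (fun h => absurd (Finset.mem_univ istar) h)
  have hsumd : ∑ i, d i * βstar i = d istar * βstar istar :=
    Finset.sum_eq_single istar (fun b _ hb => by rw [hsupp b hb, mul_zero])
      (fun h => absurd (Finset.mem_univ istar) h)
  refine ⟨hsupp, hβi, ?_⟩
  rw [hsumβ, hβi]
  rw [hsumd, hβi] at hc2
  field_simp at hc2 ⊢
  linear_combination hc2
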